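/- Let p : ℝ^d → ℝ^m and q : ℝ^m → ℝ^s be polynomial maps with p(0) = 0 and q(0) = 0. Then M_{q∘p} = M_p ∘ M_q as linear maps from T(ℝ^s) to T(ℝ^d). -/

import Mathlib

noncomputable section

open MeasureTheory

/-- Words in the alphabet `{1,…,d}`. -/
abbrev Word (d : ℕ) := List (Fin d)

/-- `T(ℝ^d)`: the real vector space with basis the words in `{1,…,d}`. -/
abbrev Tens (d : ℕ) := Word d →₀ ℝ

namespace SigPaper

variable {d m s : ℕ}

/-- The basis word `w` as an element of `T(ℝ^d)`. -/
def wordT (w : Word d) : Tens d := Finsupp.single w 1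

/-- The shuffle product of two words. -/
def shuffleWord : Word d → Word d → Tens d
  | [], v => Finsupp.single v 1
  | u, [] => Finsupp.single u 1
  | a :: u, b :: v =>
      Finsupp.mapDomain (fun w => a :: w) (shuffleWord u (b :: v)) +
      Finsupp.mapDomain (fun w => b :: w) (shuffleWord (a :: u) v)
  termination_by u v => u.length + v.length
  decreasing_by all_goals simp +arith +decide

/-- The shuffle product `⧢` on `T(ℝ^d)`, the bilinear extension of the shuffle of words. -/
def shuffle (x y : Tens d) : Tens d :=
  x.sum fun u a => y.sum fun v b => (a * b) • shuffleWord u v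

/-- The operator appending the letter `i` at the end of every word (`T_i^+`). -/
def appendLetter (i : Fin d) (x : Tens d) : Tens d :=
  Finsupp.mapDomain (fun w => w ++ [i]) x

/-- The right half-shuffle of two words: `w ≻ (v∘i) = (w ⧢ v)∘i` (zero if the right word
is empty). -/
def halfShuffleWord (u v : Word d) : Tens d :=
  match v.getLast? with
  | none => 0
  | some i => appendLetter i (shuffleWord u v.dropLast)

/-- The right half-shuffle `≻`, extended bilinearly. -/
def halfShuffle (x y : Tens d) : Tens d :=
  x.sum fun u a => y.sum fun v b => (a * b) • halfShuffleWord u v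

/-- The letter-appending operator `T_i^+`. -/
def Tplus (i : Fin d) : Tens d → Tens d := appendLetter i

/-- `T_i^-` on a word: removes the last letter if it equals `i`, otherwise `0`. -/
def TminusWord (i : Fin d) (w : Word d) : Tens d :=
  match w.getLast? with
  | none => 0
  | some j => if j = i then Finsupp.single w.dropLast 1 else 0

/-- The letter-removing operator `T_i^-`. -/
def Tminus (i : Fin d) (x : Tens d) : Tens d := x.sum fun w a => a • TminusWord i w

/-- The single-letter word `i` in `T(ℝ^d)`. -/
def letterT (i : Fin d) : Tens d := Finsupp.single [i] 1

/-- Shuffle powers `x^{⧢ n}`. -/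
def shufflePow (x : Tens d) : ℕ → Tens d
  | 0 => Finsupp.single [] 1
  | n + 1 => shuffle (shufflePow x n) x

/-- Shuffle product of a list of elements. -/
def shuffleList : List (Tens d) → Tens d
  | [] => Finsupp.single [] 1
  | x :: xs => shuffle x (shuffleList xs)

/-- Image of the monomial `x^t` under `φ_d`: the shuffle product of its letters. -/
def phiMon (t : Fin d →₀ ℕ) : Tens d :=
  shuffleList ((List.finRange d).map fun i => shufflePow (letterT i) (t i))

/-- The embedding `φ_d : ℝ[x₁,…,x_d] → (T(ℝ^d), ⧢)` sending the monomial
`x_{i₁}⋯x_{i_l}` to `i₁ ⧢ ⋯ ⧢ i_l`. -/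
def phi (f : MvPolynomial (Fin d) ℝ) : Tens d :=
  f.support.sum fun t => f.coeff t • phiMon t

/-- A polynomial map `p : ℝ^d → ℝ^m`, given by `m` polynomials in `d` variables. -/
abbrev PolyMap (d m : ℕ) := Fin m → MvPolynomial (Fin d) ℝ

/-- `k_p^{ij} = φ_d(∂p_i/∂x_j) ∈ T(ℝ^d)`. -/
def kP (p : PolyMap d m) (i : Fin m) (j : Fin d) : Tens d :=
  phi (MvPolynomial.pderiv j (p i))

/-- Auxiliary: `M_p` on reversed words, so that `M_p(e) = e` and
`M_p(w∘i) = Σ_j (M_p(w) ⧢ k_p^{ij})∘j`. -/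
def MpRev (p : PolyMap d m) : List (Fin m) → Tens d
  | [] => Finsupp.single [] 1
  | i :: w => ∑ j : Fin d, appendLetter j (shuffle (MpRev p w) (kP p i j))

/-- `M_p` on a word. -/
def MpWord (p : PolyMap d m) (w : Word m) : Tens d := MpRev p w.reverse

/-- The linear map `M_p : T(ℝ^m) → T(ℝ^d)`. -/
def Mp (p : PolyMap d m) (x : Tens m) : Tens d := x.sum fun w a => a • MpWord p w

/-- `X : [0,L] → ℝ^d` is piecewise continuously differentiable: there is a partition
`0 = t₀ ≤ t₁ ≤ ⋯ ≤ t_n = L` such that `X` is `C¹` on each subinterval. -/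
def PiecewiseC1 (X : ℝ → Fin d → ℝ) (L : ℝ) : Prop :=
  ∃ (n : ℕ) (t : Fin (n + 1) → ℝ), Monotone t ∧ t 0 = 0 ∧ t (Fin.last n) = L ∧
    ∀ k : Fin n, ContDiffOn ℝ 1 X (Set.Icc (t k.castSucc) (t k.succ))

/-- Iterated-integral signature coefficients, on reversed words:
`⟨σ(X|_{[0,t]}), w∘i⟩ = ∫_0^t ⟨σ(X|_{[0,r]}), w⟩ Ẋ^i_r dr`. -/
def sigRev (X : ℝ → Fin d → ℝ) : List (Fin d) → ℝ → ℝ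
  | [], _ => 1
  | i :: w, t => ∫ r in (0:ℝ)..t, sigRev X w r * deriv (fun u => X u i) r

/-- `⟨σ(X|_{[0,L]}), w⟩`, the signature coefficient of the word `w`. -/
def sigWord (X : ℝ → Fin d → ℝ) (L : ℝ) (w : Word d) : ℝ := sigRev X w.reverse L

/-- The pairing `⟨σ(X|_{[0,L]}), x⟩` for `x ∈ T(ℝ^d)`. -/
def sigT (X : ℝ → Fin d → ℝ) (L : ℝ) (x : Tens d) : ℝ :=
  x.sum fun w a => a * sigWord X L w

/-- The transformed path `p(X) : t ↦ p(X(t))`. -/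
def pPath (p : PolyMap d m) (X : ℝ → Fin d → ℝ) : ℝ → Fin m → ℝ :=
  fun t i => MvPolynomial.eval (X t) (p i)

/-- The translated polynomial map `p̃(y) = p(y + x₀) − p(x₀)`, satisfying `p̃(0) = 0`. -/
def ptilde (p : PolyMap d m) (x0 : Fin d → ℝ) : PolyMap d m := fun i =>
  MvPolynomial.aeval (fun j => MvPolynomial.X j + MvPolynomial.C (x0 j)) (p i) -
    MvPolynomial.C (MvPolynomial.eval x0 (p i))

/-- The pairing `⟨exp_∘(L·𝟙), x⟩` for `x ∈ T(ℝ¹)`: the coefficient of the word of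
length `n` in `exp_∘(L·𝟙)` is `Lⁿ/n!`. -/
def expPair (L : ℝ) (x : Tens 1) : ℝ :=
  x.sum fun w a => a * (L ^ w.length / (w.length.factorial : ℝ))

/-- The pairing `⟨σ(X) ∘ σ(Y), x⟩` of the concatenation product of two signatures with
`x ∈ T(ℝ^d)`: on a word `w` it is `Σ_{u∘v = w} ⟨σ(X), u⟩·⟨σ(Y), v⟩`. -/
def concatPair (X Y : ℝ → Fin d → ℝ) (L : ℝ) (x : Tens d) : ℝ :=
  x.sum fun w a =>
    a * ∑ k ∈ Finset.range (w.length + 1), sigWord X L (w.take k) * sigWord Y L (w.drop k)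


/-! ### Auxiliary development -/

open Finsupp in
lemma shuffleWord_nil_left (v : Word d) : shuffleWord [] v = Finsupp.single v 1 := by
  cases v <;> simp [shuffleWord]

open Finsupp in
lemma shuffleWord_nil_right (u : Word d) : shuffleWord u [] = Finsupp.single u 1 := by
  cases u <;> simp [shuffleWord]

lemma shuffleWord_cons_cons (a b : Fin d) (u v : Word d) :
    shuffleWord (a :: u) (b :: v) =
      Finsupp.mapDomain (fun w => a :: w) (shuffleWord u (b :: v)) +
      Finsupp.mapDomain (fun w => b :: w) (shuffleWord (a :: u) v) := by
  rw [shuffleWord]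

/-- generic pattern lemmas for `x.sum fun w a => a • F w` -/
lemma sumSmul_single {α : Type*} (F : α → Tens d) (w : α) (c : ℝ) :
    (Finsupp.single w c).sum (fun w a => a • F w) = c • F w :=
  Finsupp.sum_single_index (zero_smul _ _)

lemma sumSmul_add {α : Type*} (F : α → Tens d) (x y : α →₀ ℝ) :
    (x + y).sum (fun w a => a • F w)
      = x.sum (fun w a => a • F w) + y.sum (fun w a => a • F w) :=
  Finsupp.sum_add_index' (fun _ => zero_smul _ _) (fun _ b₁ b₂ => add_smul b₁ b₂ _)

lemma sumSmul_smul {α : Type*} (F : α → Tens d) (c : ℝ) (x : α →₀ ℝ) :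
    (c • x).sum (fun w a => a • F w) = c • x.sum (fun w a => a • F w) := by
  rw [Finsupp.sum_smul_index (h := fun w a => a • F w) (fun _ => zero_smul _ _), Finsupp.smul_sum]
  simp [mul_smul]

lemma shuffle_def (x y : Tens d) :
    shuffle x y = x.sum fun u a => a • y.sum fun v b => b • shuffleWord u v := by
  unfold shuffle
  refine Finsupp.sum_congr fun u _ => ?_
  rw [Finsupp.smul_sum]
  exact Finsupp.sum_congr fun v _ => (mul_smul _ _ _)

lemma shuffle_single_single (u v : Word d) (a b : ℝ) :
    shuffle (Finsupp.single u a) (Finsupp.single v b) = (a * b) • shuffleWord u v := by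
  rw [shuffle_def, sumSmul_single, sumSmul_single, mul_smul]

lemma shuffle_add_left (x y z : Tens d) :
    shuffle (x + y) z = shuffle x z + shuffle y z := by
  rw [shuffle_def, shuffle_def, shuffle_def, sumSmul_add]

lemma shuffle_smul_left (c : ℝ) (x y : Tens d) :
    shuffle (c • x) y = c • shuffle x y := by
  rw [shuffle_def, shuffle_def, sumSmul_smul]

lemma shuffle_single_left (u : Word d) (c : ℝ) (y : Tens d) :
    shuffle (Finsupp.single u c) y = c • y.sum fun v b => b • shuffleWord u v := by
  rw [shuffle_def, sumSmul_single]

lemma shuffle_add_right (x y z : Tens d) :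
    shuffle x (y + z) = shuffle x y + shuffle x z := by
  rw [shuffle_def, shuffle_def, shuffle_def, ← Finsupp.sum_add]
  refine Finsupp.sum_congr fun u _ => ?_
  rw [sumSmul_add (shuffleWord u), smul_add]

lemma shuffle_smul_right (c : ℝ) (x y : Tens d) :
    shuffle x (c • y) = c • shuffle x y := by
  rw [shuffle_def, shuffle_def, Finsupp.smul_sum]
  refine Finsupp.sum_congr fun u _ => ?_
  rw [sumSmul_smul (shuffleWord u), smul_comm]

lemma shuffle_zero_left (y : Tens d) : shuffle 0 y = 0 := by
  rw [shuffle_def, Finsupp.sum_zero_index]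

lemma shuffle_zero_right (x : Tens d) : shuffle x 0 = 0 := by
  rw [shuffle_def]
  simp [Finsupp.sum_zero_index]

lemma shuffle_sum_left {ι : Type*} (t : Finset ι) (f : ι → Tens d) (y : Tens d) :
    shuffle (∑ i ∈ t, f i) y = ∑ i ∈ t, shuffle (f i) y := by
  classical
  induction t using Finset.induction with
  | empty => simp [shuffle_zero_left]
  | insert _ _ h ih => simp [Finset.sum_insert h, shuffle_add_left, ih]

lemma shuffle_sum_right {ι : Type*} (t : Finset ι) (f : ι → Tens d) (x : Tens d) :
    shuffle x (∑ i ∈ t, f i) = ∑ i ∈ t, shuffle x (f i) := by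
  classical
  induction t using Finset.induction with
  | empty => simp [shuffle_zero_right]
  | insert _ _ h ih => simp [Finset.sum_insert h, shuffle_add_right, ih]
lemma appendLetter_single (j : Fin d) (w : Word d) (c : ℝ) :
    appendLetter j (Finsupp.single w c) = Finsupp.single (w ++ [j]) c :=
  Finsupp.mapDomain_single

lemma appendLetter_add (j : Fin d) (x y : Tens d) :
    appendLetter j (x + y) = appendLetter j x + appendLetter j y :=
  Finsupp.mapDomain_add

lemma appendLetter_smul (j : Fin d) (c : ℝ) (x : Tens d) :
    appendLetter j (c • x) = c • appendLetter j x :=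
  Finsupp.mapDomain_smul c x

lemma appendLetter_zero (j : Fin d) : appendLetter j (0 : Tens d) = 0 :=
  Finsupp.mapDomain_zero

lemma appendLetter_sum {ι : Type*} (j : Fin d) (t : Finset ι) (f : ι → Tens d) :
    appendLetter j (∑ i ∈ t, f i) = ∑ i ∈ t, appendLetter j (f i) :=
  Finsupp.mapDomain_finset_sum

lemma mapCons_appendLetter (a j : Fin d) (x : Tens d) :
    Finsupp.mapDomain (fun w => a :: w) (appendLetter j x)
      = appendLetter j (Finsupp.mapDomain (fun w => a :: w) x) := by
  unfold appendLetter
  rw [← Finsupp.mapDomain_comp, ← Finsupp.mapDomain_comp]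
  rfl

lemma shuffleWord_comm : ∀ (u v : Word d), shuffleWord u v = shuffleWord v u
  | [], v => by rw [shuffleWord_nil_left, shuffleWord_nil_right]
  | a :: u, [] => by rw [shuffleWord_nil_left, shuffleWord_nil_right]
  | a :: u, b :: v => by
    rw [shuffleWord_cons_cons, shuffleWord_cons_cons b a,
      shuffleWord_comm u (b :: v), shuffleWord_comm (a :: u) v, add_comm]
  termination_by u v => u.length + v.length
  decreasing_by all_goals simp +arith +decide

lemma shuffleWord_concat_concat : ∀ (u v : Word d) (a b : Fin d),
    shuffleWord (u ++ [a]) (v ++ [b]) =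
      appendLetter a (shuffleWord u (v ++ [b])) + appendLetter b (shuffleWord (u ++ [a]) v)
  | [], [], a, b => by
    simp only [List.nil_append, shuffleWord_cons_cons, shuffleWord_nil_left,
      shuffleWord_nil_right, Finsupp.mapDomain_single, appendLetter_single]
    simp [add_comm]
  | [], f :: v, a, b => by
    have IH := shuffleWord_concat_concat [] v a b
    simp only [List.nil_append] at IH
    simp only [List.nil_append, List.cons_append, shuffleWord_cons_cons, shuffleWord_nil_left,
      shuffleWord_nil_right, IH, Finsupp.mapDomain_add, Finsupp.mapDomain_single,
      appendLetter_add, appendLetter_single, mapCons_appendLetter, List.append_assoc,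
      List.singleton_append]
    abel
  | c :: u, [], a, b => by
    have IH := shuffleWord_concat_concat u [] a b
    simp only [List.nil_append] at IH
    simp only [List.nil_append, List.cons_append, shuffleWord_cons_cons, shuffleWord_nil_left,
      shuffleWord_nil_right, IH, Finsupp.mapDomain_add, Finsupp.mapDomain_single,
      appendLetter_add, appendLetter_single, mapCons_appendLetter, List.append_assoc,
      List.singleton_append]
    abel
  | c :: u, f :: v, a, b => by
    have IH1 := shuffleWord_concat_concat u (f :: v) a b
    have IH2 := shuffleWord_concat_concat (c :: u) v a b
    simp only [List.cons_append] at IH1 IH2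
    simp only [List.cons_append, shuffleWord_cons_cons, IH1, IH2, Finsupp.mapDomain_add,
      Finsupp.mapDomain_single, appendLetter_add, appendLetter_single, mapCons_appendLetter,
      shuffleWord_nil_left, shuffleWord_nil_right, List.append_assoc, List.singleton_append]
    abel
  termination_by u v a b => u.length + v.length
  decreasing_by all_goals simp +arith +decide

lemma shuffle_wordT_wordT (u v : Word d) :
    shuffle (wordT u) (wordT v) = shuffleWord u v := by
  rw [wordT, wordT, shuffle_single_single]; simp

lemma shuffle_e_left (x : Tens d) : shuffle (Finsupp.single [] 1) x = x := by
  rw [shuffle_single_left]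
  simp [shuffleWord_nil_left, Finsupp.smul_single, Finsupp.sum_single]

lemma shuffle_e_right (x : Tens d) : shuffle x (Finsupp.single [] 1) = x := by
  rw [shuffle_def]
  have h : ∀ u : Word d,
      ((Finsupp.single ([] : Word d) (1 : ℝ)).sum fun v b => b • shuffleWord u v)
        = Finsupp.single u 1 := fun u => by
    rw [Finsupp.sum_single_index (h := fun v b => b • shuffleWord u v) (zero_smul _ _), one_smul,
      shuffleWord_nil_right]
  simp only [h, Finsupp.smul_single, smul_eq_mul, mul_one, Finsupp.sum_single]
lemma single_eq_smul_wordT (w : Word d) (c : ℝ) :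
    (Finsupp.single w c : Tens d) = c • wordT w := by
  simp [wordT, Finsupp.smul_single]

lemma wordT_cons (a : Fin d) (u : Word d) :
    wordT (a :: u) = Finsupp.mapDomain (fun t => a :: t) (wordT u) := by
  rw [wordT, wordT, Finsupp.mapDomain_single]

lemma shuffle_mapCons_mapCons (a b : Fin d) (x y : Tens d) :
    shuffle (Finsupp.mapDomain (fun w => a :: w) x) (Finsupp.mapDomain (fun w => b :: w) y)
      = Finsupp.mapDomain (fun w => a :: w) (shuffle x (Finsupp.mapDomain (fun w => b :: w) y))
      + Finsupp.mapDomain (fun w => b :: w) (shuffle (Finsupp.mapDomain (fun w => a :: w) x) y) := by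
  induction x using Finsupp.induction_linear with
  | zero => simp [Finsupp.mapDomain_zero, shuffle_zero_left, shuffle_zero_right]
  | add f g hf hg =>
    simp only [Finsupp.mapDomain_add, shuffle_add_left, hf, hg, shuffle_add_right]
    abel
  | single u r =>
    induction y using Finsupp.induction_linear with
    | zero => simp [Finsupp.mapDomain_zero, shuffle_zero_left, shuffle_zero_right]
    | add f g hf hg =>
      simp only [Finsupp.mapDomain_add, shuffle_add_left, hf, hg, shuffle_add_right]
      abel
    | single v t =>
      rw [Finsupp.mapDomain_single, Finsupp.mapDomain_single, shuffle_single_single,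
        shuffle_single_single, shuffle_single_single, shuffleWord_cons_cons]
      simp only [smul_add, Finsupp.mapDomain_add, Finsupp.mapDomain_smul]

lemma shuffle_assoc_word : ∀ (u v w : Word d),
    shuffle (shuffleWord u v) (wordT w) = shuffle (wordT u) (shuffleWord v w)
  | [], v, w => by
    rw [shuffleWord_nil_left, show (Finsupp.single v 1 : Tens d) = wordT v from rfl,
      shuffle_wordT_wordT, wordT, shuffle_e_left]
  | a :: u, [], w => by
    rw [shuffleWord_nil_right, shuffleWord_nil_left,
      show (Finsupp.single (a :: u) 1 : Tens d) = wordT (a :: u) from rfl,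
      show (Finsupp.single w 1 : Tens d) = wordT w from rfl, shuffle_wordT_wordT]
  | a :: u, b :: v, [] => by
    rw [wordT, shuffle_e_right, shuffleWord_nil_right,
      show (Finsupp.single (b :: v) 1 : Tens d) = wordT (b :: v) from rfl,
      shuffle_wordT_wordT]
  | a :: u, b :: v, c :: w => by
    have IH1 := shuffle_assoc_word u (b :: v) (c :: w)
    have IH2 := shuffle_assoc_word (a :: u) v (c :: w)
    have IH3 := shuffle_assoc_word (a :: u) (b :: v) w
    simp only [wordT_cons, shuffleWord_cons_cons, shuffle_add_left, shuffle_add_right,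
      shuffle_mapCons_mapCons, Finsupp.mapDomain_add] at IH1 IH2 IH3 ⊢
    rw [IH1, IH2, ← IH3]
    simp only [Finsupp.mapDomain_add]
    abel
  termination_by u v w => u.length + v.length + w.length
  decreasing_by all_goals simp +arith +decide

lemma shuffle_assoc (x y z : Tens d) :
    shuffle (shuffle x y) z = shuffle x (shuffle y z) := by
  induction x using Finsupp.induction_linear with
  | zero => simp [shuffle_zero_left]
  | add f g hf hg => simp [shuffle_add_left, hf, hg]
  | single u r =>
    induction y using Finsupp.induction_linear with
    | zero => simp [shuffle_zero_left, shuffle_zero_right]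
    | add f g hf hg => simp [shuffle_add_left, shuffle_add_right, hf, hg]
    | single v t =>
      induction z using Finsupp.induction_linear with
      | zero => simp [shuffle_zero_right]
      | add f g hf hg => simp [shuffle_add_right, hf, hg]
      | single w c =>
        rw [shuffle_single_single, shuffle_single_single, shuffle_smul_left, shuffle_smul_right,
          single_eq_smul_wordT w c, single_eq_smul_wordT u r, shuffle_smul_right,
          shuffle_smul_left, shuffle_assoc_word, smul_smul, smul_smul,
          show r * t * c = t * c * r by ring]

lemma shuffle_comm (x y : Tens d) : shuffle x y = shuffle y x := by
  unfold shuffle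
  rw [Finsupp.sum_comm]
  exact Finsupp.sum_congr fun v _ => Finsupp.sum_congr fun u _ => by
    rw [mul_comm, shuffleWord_comm]
lemma append_singleton_injective (j : Fin d) :
    Function.Injective (fun w : Word d => w ++ [j]) := fun w₁ w₂ h => by
  simpa using h

lemma TminusWord_apply (j : Fin d) (w u : Word d) :
    TminusWord j w u = if w = u ++ [j] then 1 else 0 := by
  unfold TminusWord
  rcases List.eq_nil_or_concat w with rfl | ⟨L, b, rfl⟩
  · simp
  · simp only [List.concat_eq_append, List.getLast?_append, List.getLast?_singleton,
      List.dropLast_concat]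
    rw [show ((some b).or L.getLast?) = some b from rfl]
    dsimp only
    by_cases hbj : b = j
    · subst hbj
      by_cases hLu : L = u
      · subst hLu; simp [Finsupp.single_apply]
      · simp [hLu, Finsupp.single_apply, Ne.symm hLu]
    · rw [if_neg hbj, if_neg (fun hh : L ++ [b] = u ++ [j] =>
        hbj (by simpa using (List.append_inj' hh rfl).2))]
      simp

lemma Tminus_apply (j : Fin d) (x : Tens d) (u : Word d) :
    Tminus j x u = x (u ++ [j]) := by
  unfold Tminus
  rw [Finsupp.sum_apply]
  have h : ∀ w, (fun a : ℝ => (a • TminusWord j w) u) = fun a => if w = u ++ [j] then a else 0 := by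
    intro w; funext a
    rw [Finsupp.smul_apply, TminusWord_apply]
    split <;> simp
  calc (x.sum fun w a => (a • TminusWord j w) u)
      = x.sum fun w a => if w = u ++ [j] then a else 0 := by
        exact Finsupp.sum_congr fun w _ => congrFun (h w) (x w)
    _ = x (u ++ [j]) := by
        rw [Finsupp.sum_ite_eq' x (u ++ [j]) (fun _ a => a)]
        split
        · rfl
        · exact (Finsupp.notMem_support_iff.mp (by assumption)).symm

lemma tens_ext {x y : Tens d} (h0 : x [] = y []) (h : ∀ j, Tminus j x = Tminus j y) :
    x = y := by
  ext w
  induction w using List.reverseRecOn with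
  | nil => exact h0
  | append_singleton u j _ =>
    have hh := DFunLike.congr_fun (h j) u
    rwa [Tminus_apply, Tminus_apply] at hh

lemma appendLetter_apply_concat (i : Fin d) (x : Tens d) (u : Word d) :
    appendLetter i x (u ++ [i]) = x u :=
  Finsupp.mapDomain_apply (append_singleton_injective i) x u

lemma appendLetter_apply_nil (i : Fin d) (x : Tens d) :
    appendLetter i x [] = 0 :=
  Finsupp.mapDomain_notin_range x [] (by rintro ⟨w, hw⟩; simp at hw)

lemma appendLetter_apply_ne (i j : Fin d) (hij : i ≠ j) (x : Tens d) (u : Word d) :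
    appendLetter i x (u ++ [j]) = 0 := by
  refine Finsupp.mapDomain_notin_range x _ ?_
  rintro ⟨w, hw⟩
  simp only at hw
  have : i = j := by
    have := congrArg List.getLast? hw
    simpa [List.getLast?_append] using this
  exact hij this

lemma Tminus_appendLetter (j i : Fin d) (x : Tens d) :
    Tminus j (appendLetter i x) = if i = j then x else 0 := by
  by_cases hij : i = j
  · subst hij
    rw [if_pos rfl]
    ext u
    rw [Tminus_apply, appendLetter_apply_concat]
  · simp only [if_neg hij]
    ext u
    rw [Tminus_apply, appendLetter_apply_ne i j hij]
    simp

lemma Tminus_single_nil (j : Fin d) (c : ℝ) :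
    Tminus j (Finsupp.single ([] : Word d) c) = 0 := by
  ext u
  rw [Tminus_apply]
  simp [Finsupp.single_apply]

lemma Tminus_add (j : Fin d) (x y : Tens d) :
    Tminus j (x + y) = Tminus j x + Tminus j y := by
  ext u; simp [Tminus_apply]

lemma Tminus_smul (j : Fin d) (c : ℝ) (x : Tens d) :
    Tminus j (c • x) = c • Tminus j x := by
  ext u; simp [Tminus_apply]

lemma Tminus_zero (j : Fin d) : Tminus j (0 : Tens d) = 0 := by
  ext u; simp [Tminus_apply]

lemma Tminus_sum {ι : Type*} (j : Fin d) (t : Finset ι) (f : ι → Tens d) :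
    Tminus j (∑ i ∈ t, f i) = ∑ i ∈ t, Tminus j (f i) := by
  ext u
  rw [Tminus_apply, Finsupp.finset_sum_apply, Finsupp.finset_sum_apply]
  exact Finset.sum_congr rfl fun i _ => (Tminus_apply j (f i) u).symm

lemma Tminus_sum_appendLetter (j : Fin d) (F : Fin d → Tens d) :
    Tminus j (∑ i : Fin d, appendLetter i (F i)) = F j := by
  rw [Tminus_sum]
  rw [Finset.sum_eq_single j (fun i _ hij => by rw [Tminus_appendLetter, if_neg hij])
    (fun h => absurd (Finset.mem_univ j) h)]
  rw [Tminus_appendLetter, if_pos rfl]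

lemma reconstruct (x : Tens d) :
    x = x [] • Finsupp.single ([] : Word d) (1 : ℝ)
        + ∑ j : Fin d, appendLetter j (Tminus j x) := by
  refine (tens_ext ?_ ?_).symm
  · rw [Finsupp.add_apply, Finsupp.finset_sum_apply]
    simp [appendLetter_apply_nil, Finsupp.single_apply]
  · intro j
    rw [Tminus_add, Tminus_smul, Tminus_single_nil, Tminus_sum_appendLetter]
    simp

lemma wordT_concat (u : Word d) (a : Fin d) :
    wordT (u ++ [a]) = appendLetter a (wordT u) := by
  rw [wordT, wordT, appendLetter_single]

lemma Tminus_wordT_concat (j a : Fin d) (u : Word d) :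
    Tminus j (wordT (u ++ [a])) = if a = j then wordT u else 0 := by
  rw [wordT_concat, Tminus_appendLetter]

lemma Tminus_shuffle_word (j : Fin d) (u v : Word d) :
    Tminus j (shuffle (wordT u) (wordT v))
      = shuffle (Tminus j (wordT u)) (wordT v) + shuffle (wordT u) (Tminus j (wordT v)) := by
  rcases List.eq_nil_or_concat u with rfl | ⟨u', a, rfl⟩
  · rw [show (wordT ([] : Word d)) = Finsupp.single ([] : Word d) 1 from rfl, shuffle_e_left,
      Tminus_single_nil, shuffle_zero_left, shuffle_e_left, zero_add]
  · rcases List.eq_nil_or_concat v with rfl | ⟨v', b, rfl⟩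
    · rw [show (wordT ([] : Word d)) = Finsupp.single ([] : Word d) 1 from rfl, shuffle_e_right,
        Tminus_single_nil, shuffle_zero_right, shuffle_e_right, add_zero]
    · simp only [List.concat_eq_append]
      rw [shuffle_wordT_wordT, shuffleWord_concat_concat, Tminus_add,
        Tminus_appendLetter, Tminus_appendLetter, Tminus_wordT_concat, Tminus_wordT_concat]
      by_cases haj : a = j <;> by_cases hbj : b = j <;>
        simp [haj, hbj, shuffle_zero_left, shuffle_zero_right, shuffle_wordT_wordT]

lemma Tminus_shuffle (j : Fin d) (x y : Tens d) :
    Tminus j (shuffle x y) = shuffle (Tminus j x) y + shuffle x (Tminus j y) := by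
  induction x using Finsupp.induction_linear with
  | zero => simp [shuffle_zero_left, Tminus_zero]
  | add f g hf hg =>
    rw [shuffle_add_left, Tminus_add, hf, hg, Tminus_add, shuffle_add_left, shuffle_add_left]
    abel
  | single u r =>
    induction y using Finsupp.induction_linear with
    | zero => simp [shuffle_zero_right, Tminus_zero]
    | add f g hf hg =>
      rw [shuffle_add_right, Tminus_add, hf, hg, Tminus_add, shuffle_add_right,
        shuffle_add_right]
      abel
    | single v t =>
      rw [single_eq_smul_wordT u r, single_eq_smul_wordT v t, shuffle_smul_left,
        shuffle_smul_right, Tminus_smul, Tminus_smul, Tminus_smul, Tminus_smul,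
        shuffle_smul_left, shuffle_smul_right, shuffle_smul_left, shuffle_smul_right,
        Tminus_shuffle_word]
      rw [smul_add, smul_add]
lemma shuffleWord_apply_nil (u v : Word d) :
    shuffleWord u v [] = (if u = [] then 1 else 0) * (if v = [] then 1 else 0) := by
  cases u with
  | nil => rw [shuffleWord_nil_left]; simp [Finsupp.single_apply, eq_comm]
  | cons a u =>
    cases v with
    | nil => rw [shuffleWord_nil_right]; simp [Finsupp.single_apply]
    | cons b v =>
      rw [shuffleWord_cons_cons]
      simp only [Finsupp.add_apply]
      rw [Finsupp.mapDomain_notin_range _ _ (by rintro ⟨w, hw⟩; simp at hw),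
        Finsupp.mapDomain_notin_range _ _ (by rintro ⟨w, hw⟩; simp at hw)]
      simp

lemma shuffle_apply_nil (x y : Tens d) : shuffle x y [] = x [] * y [] := by
  unfold shuffle
  rw [Finsupp.sum_apply]
  have inner : ∀ (u : Word d) (a : ℝ),
      (y.sum fun v b => ((a * b) • shuffleWord u v) []) = (if u = [] then a else 0) * y [] := by
    intro u a
    calc (y.sum fun v b => ((a * b) • shuffleWord u v) [])
        = y.sum fun v b => (if v = [] then (if u = [] then a else 0) * b else 0) :=
          Finsupp.sum_congr fun v _ => by
            rw [Finsupp.smul_apply, shuffleWord_apply_nil]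
            by_cases hu : u = [] <;> by_cases hv : v = [] <;>
              simp [hu, hv, mul_comm]
      _ = (if u = [] then a else 0) * y [] := by
          rw [Finsupp.sum_ite_eq' y ([] : Word d) (fun _ b => (if u = [] then a else 0) * b)]
          split
          · rfl
          · rw [Finsupp.notMem_support_iff.mp (by assumption), mul_zero]
  calc (x.sum fun u a => (y.sum fun v b => (a * b) • shuffleWord u v) [])
      = x.sum fun u a => (y.sum fun v b => ((a * b) • shuffleWord u v) []) :=
        Finsupp.sum_congr fun u _ => Finsupp.sum_apply
    _ = x.sum fun u a => (if u = [] then a * y [] else 0) := Finsupp.sum_congr fun u _ => by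
        rw [inner]; split <;> simp
    _ = x [] * y [] := by
        rw [Finsupp.sum_ite_eq' x ([] : Word d) (fun _ a => a * y [])]
        split
        · rfl
        · rw [Finsupp.notMem_support_iff.mp (by assumption), zero_mul]

lemma sum_appendLetter_apply_nil (F : Fin d → Tens d) :
    (∑ j : Fin d, appendLetter j (F j)) [] = 0 := by
  rw [Finsupp.finset_sum_apply]
  exact Finset.sum_eq_zero fun j _ => appendLetter_apply_nil j (F j)

section MpLemmas

variable (p : PolyMap d m)

lemma Mp_single (w : Word m) (c : ℝ) : Mp p (Finsupp.single w c) = c • MpWord p w :=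
  sumSmul_single (MpWord p) w c

lemma Mp_add (x y : Tens m) : Mp p (x + y) = Mp p x + Mp p y :=
  sumSmul_add (MpWord p) x y

lemma Mp_smul (c : ℝ) (x : Tens m) : Mp p (c • x) = c • Mp p x :=
  sumSmul_smul (MpWord p) c x

lemma Mp_zero : Mp p (0 : Tens m) = 0 := Finsupp.sum_zero_index

lemma Mp_sum {ι : Type*} (t : Finset ι) (f : ι → Tens m) :
    Mp p (∑ i ∈ t, f i) = ∑ i ∈ t, Mp p (f i) := by
  classical
  induction t using Finset.induction with
  | empty => simp [Mp_zero]
  | insert _ _ h ih => simp [Finset.sum_insert h, Mp_add, ih]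

lemma MpWord_nil : MpWord p [] = Finsupp.single [] 1 := rfl

lemma Mp_e : Mp p (Finsupp.single ([] : Word m) (1 : ℝ)) = Finsupp.single [] 1 := by
  rw [Mp_single, MpWord_nil, one_smul]

lemma MpWord_concat (w : Word m) (i : Fin m) :
    MpWord p (w ++ [i]) = ∑ j : Fin d, appendLetter j (shuffle (MpWord p w) (kP p i j)) := by
  rw [MpWord, List.reverse_append]
  rfl

lemma Tminus_MpWord_concat (w : Word m) (i : Fin m) (j : Fin d) :
    Tminus j (MpWord p (w ++ [i])) = shuffle (MpWord p w) (kP p i j) := by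
  rw [MpWord_concat, Tminus_sum_appendLetter]

lemma MpWord_concat_apply_nil (w : Word m) (i : Fin m) :
    MpWord p (w ++ [i]) [] = 0 := by
  rw [MpWord_concat]; exact sum_appendLetter_apply_nil _

lemma Mp_appendLetter (i : Fin m) (x : Tens m) :
    Mp p (appendLetter i x) = ∑ j : Fin d, appendLetter j (shuffle (Mp p x) (kP p i j)) := by
  induction x using Finsupp.induction_linear with
  | zero =>
    simp [appendLetter_zero, Mp_zero, shuffle_zero_left]
  | add f g hf hg =>
    rw [appendLetter_add, Mp_add, hf, hg, Mp_add, ← Finset.sum_add_distrib]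
    exact Finset.sum_congr rfl fun j _ => by rw [shuffle_add_left, appendLetter_add]
  | single w c =>
    rw [appendLetter_single, Mp_single, Mp_single, MpWord_concat, Finset.smul_sum]
    exact Finset.sum_congr rfl fun j _ => by
      rw [← appendLetter_smul, ← shuffle_smul_left]

lemma Mp_shuffleWord_aux : ∀ (n : ℕ) (u v : Word m), u.length + v.length = n →
    Mp p (shuffleWord u v) = shuffle (MpWord p u) (MpWord p v) := by
  intro n
  induction n using Nat.strong_induction_on with
  | _ n IH =>
    intro u v hn
    rcases List.eq_nil_or_concat u with rfl | ⟨u', a, rfl⟩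
    · rw [shuffleWord_nil_left, Mp_single, one_smul, MpWord_nil, shuffle_e_left]
    · rcases List.eq_nil_or_concat v with rfl | ⟨v', b, rfl⟩
      · rw [shuffleWord_nil_right, Mp_single, one_smul, MpWord_nil, shuffle_e_right]
      · simp only [List.concat_eq_append] at hn ⊢
        rw [shuffleWord_concat_concat, Mp_add, Mp_appendLetter, Mp_appendLetter,
          IH (u'.length + (v' ++ [b]).length) (by simp at hn ⊢; omega) u' (v' ++ [b]) rfl,
          IH ((u' ++ [a]).length + v'.length) (by simp at hn ⊢; omega) (u' ++ [a]) v' rfl]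
        refine tens_ext ?_ ?_
        · rw [Finsupp.add_apply, sum_appendLetter_apply_nil, sum_appendLetter_apply_nil,
            shuffle_apply_nil, MpWord_concat_apply_nil, zero_mul, add_zero]
        · intro j
          rw [Tminus_add, Tminus_sum_appendLetter, Tminus_sum_appendLetter, Tminus_shuffle,
            Tminus_MpWord_concat, Tminus_MpWord_concat]
          congr 1
          · rw [shuffle_assoc, shuffle_assoc, shuffle_comm (MpWord p (v' ++ [b]))]
          · rw [shuffle_assoc]

lemma Mp_shuffleWord (u v : Word m) :
    Mp p (shuffleWord u v) = shuffle (MpWord p u) (MpWord p v) :=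
  Mp_shuffleWord_aux p _ u v rfl

lemma Mp_shuffle (x y : Tens m) :
    Mp p (shuffle x y) = shuffle (Mp p x) (Mp p y) := by
  induction x using Finsupp.induction_linear with
  | zero => simp [shuffle_zero_left, Mp_zero]
  | add f g hf hg => rw [shuffle_add_left, Mp_add, hf, hg, Mp_add, shuffle_add_left]
  | single u r =>
    induction y using Finsupp.induction_linear with
    | zero => simp [shuffle_zero_right, Mp_zero]
    | add f g hf hg => rw [shuffle_add_right, Mp_add, hf, hg, Mp_add, shuffle_add_right]
    | single v t =>
      rw [shuffle_single_single, Mp_smul, Mp_shuffleWord, Mp_single, Mp_single,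
        shuffle_smul_left, shuffle_smul_right, smul_smul]

end MpLemmas
section PhiLemmas

lemma phi_def (f : MvPolynomial (Fin d) ℝ) :
    phi f = Finsupp.sum (AddMonoidAlgebra.coeff f) fun t a => a • phiMon t := by
  rw [MvPolynomial.sum_def]; rfl

lemma phi_monomial (t : Fin d →₀ ℕ) (c : ℝ) :
    phi (MvPolynomial.monomial t c) = c • phiMon t := by
  rw [phi_def, ← MvPolynomial.single_eq_monomial, AddMonoidAlgebra.coeff_single]
  exact sumSmul_single phiMon t c

lemma phi_add (f g : MvPolynomial (Fin d) ℝ) : phi (f + g) = phi f + phi g := by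
  rw [phi_def, phi_def, phi_def, AddMonoidAlgebra.coeff_add]; exact sumSmul_add phiMon _ _

lemma phi_zero : phi (0 : MvPolynomial (Fin d) ℝ) = 0 := by
  rw [phi_def, AddMonoidAlgebra.coeff_zero]; exact Finsupp.sum_zero_index

lemma phi_smul (c : ℝ) (f : MvPolynomial (Fin d) ℝ) : phi (c • f) = c • phi f := by
  rw [phi_def, phi_def, AddMonoidAlgebra.coeff_smul]; exact sumSmul_smul phiMon c _

lemma phi_sum {ι : Type*} (t : Finset ι) (f : ι → MvPolynomial (Fin d) ℝ) :
    phi (∑ i ∈ t, f i) = ∑ i ∈ t, phi (f i) := by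
  classical
  induction t using Finset.induction with
  | empty => simp [phi_zero]
  | insert _ _ h ih => simp [Finset.sum_insert h, phi_add, ih]

lemma shufflePow_add (x : Tens d) (n k : ℕ) :
    shufflePow x (n + k) = shuffle (shufflePow x n) (shufflePow x k) := by
  induction k with
  | zero => rw [Nat.add_zero, shufflePow, shuffle_e_right]
  | succ k ih => rw [← Nat.add_assoc, shufflePow, shufflePow, ih, shuffle_assoc]

lemma shuffle_mul_mul_comm (x y z w : Tens d) :
    shuffle (shuffle x y) (shuffle z w) = shuffle (shuffle x z) (shuffle y w) := by
  rw [shuffle_assoc, shuffle_assoc, ← shuffle_assoc y z w, shuffle_comm y z,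
    shuffle_assoc z y w]

lemma shuffleList_shuffle (f g : Fin d → Tens d) (l : List (Fin d)) :
    shuffle (shuffleList (l.map f)) (shuffleList (l.map g))
      = shuffleList (l.map fun i => shuffle (f i) (g i)) := by
  induction l with
  | nil => simp [shuffleList, shuffle_e_left]
  | cons a l ih => rw [List.map_cons, List.map_cons, List.map_cons, shuffleList, shuffleList,
      shuffleList, shuffle_mul_mul_comm, ih]

lemma phiMon_add (t t' : Fin d →₀ ℕ) :
    phiMon (t + t') = shuffle (phiMon t) (phiMon t') := by
  unfold phiMon
  rw [shuffleList_shuffle]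
  congr 1
  refine List.map_congr_left fun i _ => ?_
  rw [Finsupp.add_apply, shufflePow_add]

lemma phi_mul (f g : MvPolynomial (Fin d) ℝ) :
    phi (f * g) = shuffle (phi f) (phi g) := by
  induction f using MvPolynomial.induction_on' with
  | monomial u a =>
    induction g using MvPolynomial.induction_on' with
    | monomial v b =>
      rw [MvPolynomial.monomial_mul, phi_monomial, phi_monomial, phi_monomial, phiMon_add,
        shuffle_smul_left, shuffle_smul_right, smul_smul]
    | add p q hp hq => rw [mul_add, phi_add, hp, hq, phi_add, shuffle_add_right]
  | add p q hp hq => rw [add_mul, phi_add, hp, hq, phi_add, shuffle_add_left]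

lemma phiMon_zero : phiMon (0 : Fin d →₀ ℕ) = Finsupp.single [] 1 := by
  unfold phiMon
  generalize List.finRange d = l
  induction l with
  | nil => rfl
  | cons a l ih => rw [List.map_cons, shuffleList, ih]; simp [shufflePow, shuffle_e_left]

lemma phi_C (a : ℝ) :
    phi (MvPolynomial.C a : MvPolynomial (Fin d) ℝ) = a • Finsupp.single [] 1 := by
  rw [show (MvPolynomial.C a : MvPolynomial (Fin d) ℝ) = MvPolynomial.monomial 0 a from rfl,
    phi_monomial, phiMon_zero]

lemma shufflePow_one (x : Tens d) : shufflePow x 1 = x := by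
  rw [shufflePow, shufflePow, shuffle_e_left]

lemma shuffleList_count (x : Tens d) (i : Fin d) (l : List (Fin d)) :
    shuffleList (l.map fun j => if j = i then x else Finsupp.single [] 1)
      = shufflePow x (l.count i) := by
  induction l with
  | nil => rfl
  | cons a l ih =>
    rw [List.map_cons, shuffleList, ih]
    by_cases hai : a = i
    · subst hai
      rw [if_pos rfl, List.count_cons_self, shufflePow, shuffle_comm]
    · rw [if_neg hai, List.count_cons_of_ne hai, shuffle_e_left]

lemma phiMon_single (i : Fin d) : phiMon (Finsupp.single i 1) = letterT i := by
  unfold phiMon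
  rw [show ((List.finRange d).map fun j => shufflePow (letterT j) ((Finsupp.single i 1) j))
      = (List.finRange d).map fun j => if j = i then letterT i else Finsupp.single [] 1 from
    List.map_congr_left fun j _ => by
      by_cases hji : j = i
      · subst hji; rw [if_pos rfl, Finsupp.single_eq_same, shufflePow_one]
      · rw [if_neg hji, Finsupp.single_eq_of_ne hji]; rfl]
  rw [shuffleList_count,
    List.count_eq_one_of_mem (List.nodup_finRange d) (List.mem_finRange i), shufflePow_one]

lemma phi_X (i : Fin d) : phi (MvPolynomial.X i : MvPolynomial (Fin d) ℝ) = letterT i := by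
  rw [show (MvPolynomial.X i : MvPolynomial (Fin d) ℝ)
      = MvPolynomial.monomial (Finsupp.single i 1) 1 from rfl, phi_monomial, phiMon_single,
    one_smul]

end PhiLemmas
section PhiEval

lemma letterT_apply_nil (i : Fin d) : letterT i [] = 0 := by
  rw [letterT, Finsupp.single_apply]; simp

lemma shufflePow_apply_nil (i : Fin d) (n : ℕ) :
    shufflePow (letterT i) n [] = if n = 0 then 1 else 0 := by
  cases n with
  | zero => rw [shufflePow]; simp
  | succ n => rw [shufflePow, shuffle_apply_nil, letterT_apply_nil, mul_zero]; simp

lemma shuffleList_apply_nil (l : List (Tens d)) :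
    shuffleList l [] = (l.map fun x => x []).prod := by
  induction l with
  | nil => rw [shuffleList]; simp
  | cons x l ih => rw [shuffleList, shuffle_apply_nil, ih, List.map_cons, List.prod_cons]

lemma phiMon_apply_nil (t : Fin d →₀ ℕ) :
    phiMon t [] = if t = 0 then 1 else 0 := by
  unfold phiMon
  rw [shuffleList_apply_nil, List.map_map]
  by_cases ht : t = 0
  · subst ht
    rw [if_pos rfl]
    refine List.prod_eq_one fun x hx => ?_
    obtain ⟨i, _, rfl⟩ := List.mem_map.mp hx
    simp [shufflePow_apply_nil]
  · rw [if_neg ht]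
    obtain ⟨i, hi⟩ : ∃ i, t i ≠ 0 := by
      by_contra h
      push_neg at h
      exact ht (Finsupp.ext h)
    refine List.prod_eq_zero ?_
    refine List.mem_map.mpr ⟨i, List.mem_finRange i, ?_⟩
    simp [shufflePow_apply_nil, hi]

lemma phi_apply_nil (f : MvPolynomial (Fin d) ℝ) :
    phi f [] = MvPolynomial.eval (0 : Fin d → ℝ) f := by
  rw [MvPolynomial.eval_zero, MvPolynomial.constantCoeff_eq, phi_def]
  rw [Finsupp.sum_apply]
  calc ((AddMonoidAlgebra.coeff f).sum fun t a => (a • phiMon t) [])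
      = (AddMonoidAlgebra.coeff f).sum fun t a => (if t = 0 then a else 0) := Finsupp.sum_congr fun t _ => by
        rw [Finsupp.smul_apply, phiMon_apply_nil]; split <;> simp
    _ = MvPolynomial.coeff 0 f := by
        rw [Finsupp.sum_ite_eq' (AddMonoidAlgebra.coeff f) (0 : Fin d →₀ ℕ) fun _ a => a]
        split
        · rfl
        · exact (Finsupp.notMem_support_iff.mp (by assumption)).symm

lemma Tminus_letterT (j i : Fin d) :
    Tminus j (letterT i) = if i = j then Finsupp.single [] 1 else 0 := by
  rw [show letterT i = appendLetter i (Finsupp.single [] 1) from by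
    rw [appendLetter_single]; rfl, Tminus_appendLetter]

lemma Tminus_phi (j : Fin d) (f : MvPolynomial (Fin d) ℝ) :
    Tminus j (phi f) = phi (MvPolynomial.pderiv j f) := by
  induction f using MvPolynomial.induction_on with
  | C a => rw [phi_C, Tminus_smul, Tminus_single_nil, smul_zero]; simp [phi_zero]
  | add f g hf hg => rw [phi_add, Tminus_add, hf, hg, map_add, phi_add]
  | mul_X f i hf =>
    rw [phi_mul, phi_X, Tminus_shuffle, hf, Tminus_letterT, MvPolynomial.pderiv_mul,
      phi_add, phi_mul, phi_X, MvPolynomial.pderiv_X, Pi.single_apply]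
    by_cases hij : i = j
    · rw [if_pos hij, if_pos hij, mul_one, shuffle_e_right]
    · rw [if_neg hij, if_neg hij, mul_zero, phi_zero, shuffle_zero_right]

end PhiEval

section MpPhi

variable (p : PolyMap d m)

lemma Mp_letterT (hp : ∀ i, MvPolynomial.eval (0 : Fin d → ℝ) (p i) = 0) (i : Fin m) :
    Mp p (letterT i) = phi (p i) := by
  have h1 : (letterT i : Tens m) = appendLetter i (Finsupp.single [] 1) := by
    rw [appendLetter_single]; rfl
  rw [h1, Mp_appendLetter, Mp_e]
  have h2 : ∀ j : Fin d, shuffle (Finsupp.single ([] : Word d) (1:ℝ)) (kP p i j)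
      = Tminus j (phi (p i)) := fun j => by
    rw [shuffle_e_left, kP, Tminus_phi]
  rw [Finset.sum_congr rfl fun j _ => by rw [h2 j]]
  conv_rhs => rw [reconstruct (phi (p i))]
  rw [phi_apply_nil, hp i, zero_smul, zero_add]

lemma Mp_phi (hp : ∀ i, MvPolynomial.eval (0 : Fin d → ℝ) (p i) = 0)
    (f : MvPolynomial (Fin m) ℝ) :
    Mp p (phi f) = phi (MvPolynomial.bind₁ p f) := by
  induction f using MvPolynomial.induction_on with
  | C a =>
    rw [phi_C, Mp_smul, Mp_e,
      show (MvPolynomial.bind₁ p) (MvPolynomial.C a) = MvPolynomial.C a from by simp, phi_C]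
  | add f g hf hg => rw [phi_add, Mp_add, hf, hg, map_add, phi_add]
  | mul_X f i hf =>
    rw [phi_mul, phi_X, Mp_shuffle, hf, Mp_letterT p hp, map_mul,
      MvPolynomial.bind₁_X_right, phi_mul]

end MpPhi
lemma pderiv_bind₁ (p : PolyMap d m) (f : MvPolynomial (Fin m) ℝ) (j : Fin d) :
    MvPolynomial.pderiv j (MvPolynomial.bind₁ p f)
      = ∑ l : Fin m,
          MvPolynomial.bind₁ p (MvPolynomial.pderiv l f) * MvPolynomial.pderiv j (p l) := by
  induction f using MvPolynomial.induction_on with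
  | C a => simp
  | add f g hf hg => simp [map_add, hf, hg, add_mul, Finset.sum_add_distrib]
  | mul_X f i hf =>
    rw [map_mul, MvPolynomial.bind₁_X_right, MvPolynomial.pderiv_mul, hf, Finset.sum_mul]
    have key : ∀ l : Fin m,
        MvPolynomial.bind₁ p (MvPolynomial.pderiv l (f * MvPolynomial.X i))
            * MvPolynomial.pderiv j (p l)
          = MvPolynomial.bind₁ p (MvPolynomial.pderiv l f) * MvPolynomial.pderiv j (p l) * p i
            + (if i = l then MvPolynomial.bind₁ p f * MvPolynomial.pderiv j (p l) else 0) :=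
      fun l => by
        rw [MvPolynomial.pderiv_mul, MvPolynomial.pderiv_X, Pi.single_apply]
        by_cases hil : i = l
        · simp only [if_pos hil, map_add, map_mul, MvPolynomial.bind₁_X_right, map_one]
          ring
        · simp only [if_neg hil, map_add, map_mul, MvPolynomial.bind₁_X_right, map_zero]
          ring
    rw [Finset.sum_congr rfl fun l _ => key l, Finset.sum_add_distrib, Finset.sum_ite_eq,
      if_pos (Finset.mem_univ i)]

section Main

variable (p : PolyMap d m) (q : PolyMap m s)

lemma kP_comp (hp : ∀ i, MvPolynomial.eval (0 : Fin d → ℝ) (p i) = 0) (i : Fin s) (j : Fin d) :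
    kP (fun l => MvPolynomial.bind₁ p (q l)) i j
      = ∑ l : Fin m, shuffle (Mp p (kP q i l)) (kP p l j) := by
  rw [kP, pderiv_bind₁, phi_sum]
  refine Finset.sum_congr rfl fun l _ => ?_
  rw [phi_mul, ← Mp_phi p hp]
  rfl

lemma MpWord_comp (hp : ∀ i, MvPolynomial.eval (0 : Fin d → ℝ) (p i) = 0) (w : Word s) :
    MpWord (fun l => MvPolynomial.bind₁ p (q l)) w = Mp p (MpWord q w) := by
  induction w using List.reverseRecOn with
  | nil => rw [MpWord_nil, MpWord_nil, Mp_e]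
  | append_singleton w i ih =>
    rw [MpWord_concat, MpWord_concat, Mp_sum]
    simp only [Mp_appendLetter, ih, kP_comp p q hp, shuffle_sum_right, appendLetter_sum,
      Mp_shuffle, shuffle_assoc]
    exact Finset.sum_comm

end Main

/-- For polynomial maps `p : ℝ^d → ℝ^m` and `q : ℝ^m → ℝ^s` with
`p(0) = 0` and `q(0) = 0`, `M_{q∘p} = M_p ∘ M_q` as linear maps `T(ℝ^s) → T(ℝ^d)`. -/
theorem Mp_comp (d m s : ℕ) (p : PolyMap d m) (q : PolyMap m s)
    (hp : ∀ i, MvPolynomial.eval (0 : Fin d → ℝ) (p i) = 0)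
    (hq : ∀ i, MvPolynomial.eval (0 : Fin m → ℝ) (q i) = 0) :
    ∀ x : Tens s, Mp (fun l => MvPolynomial.bind₁ p (q l)) x = Mp p (Mp q x) := by
  intro x
  induction x using Finsupp.induction_linear with
  | zero => rw [Mp_zero, Mp_zero, Mp_zero]
  | add f g hf hg => rw [Mp_add, Mp_add, Mp_add, hf, hg]
  | single w c => rw [Mp_single, Mp_single, Mp_smul, MpWord_comp p q hp w]

end SigPaper
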